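/- For any real r > 0, the only elements of SO(3) that fix the polynomial h(x,y,z) = r·z(2z² − 3x² − 3y²) under the pullback action are the rotations about the z-axis; that is, the stabilizer of h in SO(3) equals the subgroup SO(2) of rotations fixing the z-axis. -/
import Mathlib


open Matrix

/-- The stabilizer in SO(3) of h = r·z(2z² − 3x² − 3y²) (r > 0), acting by pullback,
consists exactly of the rotations about the z-axis. -/
theorem stabilizer_so2 (r : ℝ) (hr : 0 < r)
    (A : Matrix (Fin 3) (Fin 3) ℝ) (hA : A * Aᵀ = 1) (hdet : A.det = 1) :
    (∀ v : Fin 3 → ℝ,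
        r * (A⁻¹.mulVec v 2) *
            (2 * (A⁻¹.mulVec v 2) ^ 2 - 3 * (A⁻¹.mulVec v 0) ^ 2 - 3 * (A⁻¹.mulVec v 1) ^ 2) =
          r * v 2 * (2 * (v 2) ^ 2 - 3 * (v 0) ^ 2 - 3 * (v 1) ^ 2)) ↔
      A.mulVec ![0, 0, 1] = ![0, 0, 1] := by
  have hAinv : A⁻¹ = Aᵀ := Matrix.inv_eq_right_inv hA
  have hA' : Aᵀ * A = 1 := mul_eq_one_comm.mp hA
  -- row orthonormality
  have row : ∀ i k : Fin 3, A i 0 * A k 0 + A i 1 * A k 1 + A i 2 * A k 2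
      = if i = k then 1 else 0 := by
    intro i k
    have := congrFun (congrFun hA i) k
    simpa [Matrix.mul_apply, Fin.sum_univ_three, Matrix.one_apply, Matrix.transpose_apply]
      using this
  have col : ∀ i k : Fin 3, A 0 i * A 0 k + A 1 i * A 1 k + A 2 i * A 2 k
      = if i = k then 1 else 0 := by
    intro i k
    have := congrFun (congrFun hA' i) k
    simpa [Matrix.mul_apply, Fin.sum_univ_three, Matrix.one_apply, Matrix.transpose_apply]
      using this
  constructor
  · intro H
    have he := H ![0,0,1]
    simp only [hAinv, Matrix.mulVec, dotProduct, Fin.sum_univ_three,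
      Matrix.transpose_apply, Matrix.cons_val_zero, Matrix.cons_val_one, Matrix.head_cons,
      Matrix.cons_val_two, Matrix.tail_cons] at he
    set t := A 2 2 with ht
    have hrow := row 2 2
    simp at hrow
    have hts : t * (2 * t ^ 2 - 3 * A 2 0 ^ 2 - 3 * A 2 1 ^ 2) = 2 := by
      have : r * (t * (2 * t ^ 2 - 3 * A 2 0 ^ 2 - 3 * A 2 1 ^ 2)) = r * 2 := by
        ring_nf
        ring_nf at he
        linarith [he]
      exact mul_left_cancel₀ (ne_of_gt hr) this
    have hrow' : A 2 0 ^ 2 + A 2 1 ^ 2 + t ^ 2 = 1 := by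
      nlinarith [hrow]
    have hfac : (t - 1) * (5 * t ^ 2 + 5 * t + 2) = 0 := by
      linear_combination hts + 3 * t * hrow'
    have hpos : 5 * t ^ 2 + 5 * t + 2 > 0 := by nlinarith [sq_nonneg (2 * t + 1)]
    have ht1 : t = 1 := by
      rcases mul_eq_zero.mp hfac with h | h
      · linarith
      · linarith
    clear he H hts hfac hpos hrow
    have h22 : A 2 2 = 1 := by rw [← ht]; exact ht1
    have hsum : A 2 0 ^ 2 + A 2 1 ^ 2 = 0 := by rw [ht1] at hrow'; linarith
    have h1 := sq_nonneg (A 2 0); have h2 := sq_nonneg (A 2 1)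
    have h20 : A 2 0 = 0 := pow_eq_zero_iff two_ne_zero |>.mp (by linarith)
    have h21 : A 2 1 = 0 := pow_eq_zero_iff two_ne_zero |>.mp (by linarith)
    have hcol := col 2 2
    norm_num [h22] at hcol
    have hsum2 : A 0 2 ^ 2 + A 1 2 ^ 2 = 0 := by nlinarith [hcol]
    have h3 := sq_nonneg (A 0 2); have h4 := sq_nonneg (A 1 2)
    have h02 : A 0 2 = 0 := pow_eq_zero_iff two_ne_zero |>.mp (by linarith)
    have h12 : A 1 2 = 0 := pow_eq_zero_iff two_ne_zero |>.mp (by linarith)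
    funext i
    fin_cases i <;>
      simp [Matrix.mulVec, dotProduct, Fin.sum_univ_three, h02, h12, h22]
  · intro hfix
    have h02 : A 0 2 = 0 := by
      have := congrFun hfix 0
      simpa [Matrix.mulVec, dotProduct, Fin.sum_univ_three] using this
    have h12 : A 1 2 = 0 := by
      have := congrFun hfix 1
      simpa [Matrix.mulVec, dotProduct, Fin.sum_univ_three] using this
    have h22 : A 2 2 = 1 := by
      have := congrFun hfix 2
      simpa [Matrix.mulVec, dotProduct, Fin.sum_univ_three] using this
    have hrow2 := row 2 2
    simp [h22] at hrow2
    have h20 : A 2 0 = 0 := by nlinarith [sq_nonneg (A 2 0), sq_nonneg (A 2 1)]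
    have h21 : A 2 1 = 0 := by nlinarith [sq_nonneg (A 2 0), sq_nonneg (A 2 1)]
    intro v
    simp only [hAinv, Matrix.mulVec, dotProduct, Fin.sum_univ_three,
      Matrix.transpose_apply]
    have r00 := row 0 0
    have r11 := row 1 1
    have r01 := row 0 1
    simp [h02, h12] at r00 r11 r01
    rw [h02, h12, h22, h20, h21]
    ring_nf
    linear_combination (-3 * r * v 2 * v 0 ^ 2) * r00 + (-3 * r * v 2 * v 1 ^ 2) * r11
      + (-6 * r * v 2 * v 0 * v 1) * r01
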